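/- Let $K(\gamma) = \int_0^1 \frac{dt}{\sqrt{(1-t^2)(1-\gamma^2 t^2)}}$ and $E(\gamma) = \int_0^1 \frac{\sqrt{1-\gamma^2 t^2}}{\sqrt{1-t^2}}\,dt$ be the complete elliptic integrals of the first and second kind. Then the function $H(\gamma) = [(\gamma^2 - 2)K(\gamma) + 3E(\gamma)]\,K(\gamma)$ is strictly decreasing on $[0,1)$ and maps $[0,1)$ onto $(-\infty, \pi^2/4]$. -/

import Mathlib

open Real Set

/-- Complete elliptic integral of the first kind. -/
noncomputable def ellK (γ : ℝ) : ℝ :=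
  ∫ t in (0:ℝ)..1, 1 / Real.sqrt ((1 - t^2) * (1 - γ^2 * t^2))

/-- Complete elliptic integral of the second kind. -/
noncomputable def ellE (γ : ℝ) : ℝ :=
  ∫ t in (0:ℝ)..1, Real.sqrt (1 - γ^2 * t^2) / Real.sqrt (1 - t^2)

open MeasureTheory Filter intervalIntegral Topology

-- master integrability lemma
lemma II_of_bound (f : ℝ → ℝ) (c : ℝ) (hm : AEStronglyMeasurable f (volume.restrict (Ioo (0:ℝ) 1)))
    (hb : ∀ t ∈ Ioo (0:ℝ) 1, |f t| ≤ c * (1 - t) ^ (-(1/2) : ℝ)) :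
    IntervalIntegrable f volume 0 1 := by
  have hg : IntervalIntegrable (fun t => c * (1 - t) ^ (-(1/2) : ℝ)) volume 0 1 := by
    have h0 : IntervalIntegrable (fun x : ℝ => x ^ (-(1/2) : ℝ)) volume 0 1 :=
      intervalIntegral.intervalIntegrable_rpow' (by norm_num)
    have h1 := (h0.comp_sub_left 1)
    simp only [sub_self, sub_zero] at h1
    exact (h1.symm).const_mul c
  rw [intervalIntegrable_iff_integrableOn_Ioo_of_le (by norm_num)] at hg ⊢
  refine hg.integrable.mono' hm ?_
  filter_upwards [ae_restrict_mem measurableSet_Ioo] with t ht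
  simpa using hb t ht

lemma ae_uIoc_of_Ioo (P : ℝ → Prop) (h : ∀ t ∈ Ioo (0:ℝ) 1, P t) :
    ∀ᵐ t ∂volume, t ∈ Set.uIoc (0:ℝ) 1 → P t := by
  have h1 : ∀ᵐ t ∂(volume : Measure ℝ), t ≠ 1 := by
    rw [ae_iff]
    simp [Real.volume_singleton]
  filter_upwards [h1] with t ht1 ht
  rw [Set.uIoc_of_le (by norm_num : (0:ℝ) ≤ 1)] at ht
  exact h t ⟨ht.1, lt_of_le_of_ne ht.2 ht1⟩

noncomputable def wK (γ t : ℝ) : ℝ := 1 / Real.sqrt ((1 - t^2) * (1 - γ^2 * t^2))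
noncomputable def wE (γ t : ℝ) : ℝ := Real.sqrt (1 - γ^2*t^2) / Real.sqrt (1 - t^2)
noncomputable def wA (γ t : ℝ) : ℝ := t^2 / (Real.sqrt (1-t^2) * Real.sqrt (1-γ^2*t^2)^3)
noncomputable def wB (γ t : ℝ) : ℝ := t^2 / (Real.sqrt (1-t^2) * Real.sqrt (1-γ^2*t^2))
noncomputable def wC (γ t : ℝ) : ℝ := Real.sqrt (1-t^2) / Real.sqrt (1-γ^2*t^2)
noncomputable def wD (γ t : ℝ) : ℝ := t^2 * Real.sqrt (1-t^2) / Real.sqrt (1-γ^2*t^2)^3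
noncomputable def wG (γ t : ℝ) : ℝ :=
  (1 - 2*t^2 + γ^2*t^4) / (Real.sqrt (1-t^2) * Real.sqrt (1-γ^2*t^2)^3)

lemma s_pos {t : ℝ} (ht : t ∈ Ioo (0:ℝ) 1) : 0 < Real.sqrt (1 - t^2) :=
  Real.sqrt_pos.2 (by nlinarith [ht.1, ht.2])

lemma r_pos {x t : ℝ} (hx : x^2 < 1) (ht : t ∈ Ioo (0:ℝ) 1) : 0 < Real.sqrt (1 - x^2*t^2) :=
  Real.sqrt_pos.2 (by nlinarith [ht.1, ht.2, sq_nonneg x])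

-- pointwise identities
lemma alg1 {γ t : ℝ} (hγ : γ^2 < 1) (ht : t ∈ Ioo (0:ℝ) 1) :
    wE γ t - wK γ t = -(γ^2) * wB γ t := by
  have hs := s_pos ht; have hr := r_pos hγ ht
  have hs2 : Real.sqrt (1 - t^2) ^ 2 = 1 - t^2 := Real.sq_sqrt (by nlinarith [ht.1, ht.2])
  have hr2 : Real.sqrt (1 - γ^2*t^2) ^ 2 = 1 - γ^2*t^2 :=
    Real.sq_sqrt (by nlinarith [ht.1, ht.2, sq_nonneg γ])
  unfold wE wK wB
  rw [Real.sqrt_mul (by nlinarith [ht.1, ht.2] : (0:ℝ) ≤ 1 - t^2)]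
  field_simp
  linear_combination hr2

section
variable {γ t : ℝ} (hγ : γ^2 < 1) (ht : t ∈ Ioo (0:ℝ) 1)
include hγ ht

lemma alg2 : wE γ t - (1-γ^2) * wK γ t = γ^2 * wC γ t := by
  have hs := s_pos ht; have hr := r_pos hγ ht
  have hs2 : Real.sqrt (1 - t^2) ^ 2 = 1 - t^2 := Real.sq_sqrt (by nlinarith [ht.1, ht.2])
  have hr2 : Real.sqrt (1 - γ^2*t^2) ^ 2 = 1 - γ^2*t^2 :=
    Real.sq_sqrt (by nlinarith [ht.1, ht.2, sq_nonneg γ])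
  unfold wE wK wC
  rw [Real.sqrt_mul (by nlinarith [ht.1, ht.2] : (0:ℝ) ≤ 1 - t^2)]
  field_simp
  linear_combination hr2 - γ^2 * hs2

lemma alg3 : wC γ t - (1-γ^2) * wA γ t = wG γ t := by
  have hs := s_pos ht; have hr := r_pos hγ ht
  have hs2 : Real.sqrt (1 - t^2) ^ 2 = 1 - t^2 := Real.sq_sqrt (by nlinarith [ht.1, ht.2])
  have hr2 : Real.sqrt (1 - γ^2*t^2) ^ 2 = 1 - γ^2*t^2 :=
    Real.sq_sqrt (by nlinarith [ht.1, ht.2, sq_nonneg γ])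
  unfold wC wA wG
  field_simp
  have hr2' : Real.sqrt (1 - t^2*γ^2) ^ 2 = 1 - t^2*γ^2 := by
    rw [show t^2*γ^2 = γ^2*t^2 by ring]; exact hr2
  congr 1
  linear_combination Real.sqrt (1 - t^2*γ^2) ^ 2 * hs2 + (1-t^2) * hr2'

lemma alg4 : (2*t^2-1) * wK γ t = -wG γ t + γ^2 * wD γ t := by
  have hs := s_pos ht; have hr := r_pos hγ ht
  have hs2 : Real.sqrt (1 - t^2) ^ 2 = 1 - t^2 := Real.sq_sqrt (by nlinarith [ht.1, ht.2])
  have hr2 : Real.sqrt (1 - γ^2*t^2) ^ 2 = 1 - γ^2*t^2 :=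
    Real.sq_sqrt (by nlinarith [ht.1, ht.2, sq_nonneg γ])
  unfold wK wG wD
  rw [Real.sqrt_mul (by nlinarith [ht.1, ht.2] : (0:ℝ) ≤ 1 - t^2)]
  field_simp
  have hr2' : Real.sqrt (1 - t^2*γ^2) ^ 2 = 1 - t^2*γ^2 := by
    rw [show t^2*γ^2 = γ^2*t^2 by ring]; exact hr2
  have hr' : 0 < Real.sqrt (1 - t^2*γ^2) := by
    rw [show t^2*γ^2 = γ^2*t^2 by ring]; exact hr
  rw [div_eq_div_iff hr'.ne' (pow_pos hr' 3).ne']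
  linear_combination Real.sqrt (1 - t^2*γ^2) * (2*t^2-1) * hr2'
    - Real.sqrt (1 - t^2*γ^2) * t^2 * γ^2 * hs2

lemma alg5 : t^2 * wK γ t = wB γ t := by
  have hs := s_pos ht; have hr := r_pos hγ ht
  unfold wK wB
  rw [Real.sqrt_mul (by nlinarith [ht.1, ht.2] : (0:ℝ) ≤ 1 - t^2)]
  field_simp

end


lemma rpow_half_eq {t : ℝ} (h1 : (0:ℝ) ≤ 1 - t) :
    (1-t) ^ (-(1/2):ℝ) = (Real.sqrt (1-t))⁻¹ := by
  rw [Real.rpow_neg h1, Real.sqrt_eq_rpow]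

lemma t2lt1 {t : ℝ} (ht : t ∈ Ioo (0:ℝ) 1) : t^2 < 1 := by
  obtain ⟨h0, h1⟩ := ht; nlinarith

lemma gt2le {γ t : ℝ} (ht : t ∈ Ioo (0:ℝ) 1) : γ^2*t^2 ≤ γ^2 :=
  mul_le_of_le_one_right (sq_nonneg γ) (t2lt1 ht).le

lemma hγsq {γ : ℝ} (hγ0 : 0 ≤ γ) (hγ1 : γ < 1) : γ^2 < 1 := by nlinarith

lemma key_bound {γ t : ℝ} (hγ0 : 0 ≤ γ) (hγ1 : γ < 1) (ht : t ∈ Ioo (0:ℝ) 1) (k : ℕ) :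
    1 / (Real.sqrt (1-t^2) * Real.sqrt (1-γ^2*t^2)^k) ≤
      ((Real.sqrt (1-γ^2))^k)⁻¹ * (1-t) ^ (-(1/2):ℝ) := by
  have h1 : (0:ℝ) < 1 - t := by linarith [ht.2]
  have hsl : Real.sqrt (1-t) ≤ Real.sqrt (1-t^2) :=
    Real.sqrt_le_sqrt (by nlinarith [ht.1, ht.2])
  have hrl : Real.sqrt (1-γ^2) ≤ Real.sqrt (1-γ^2*t^2) :=
    Real.sqrt_le_sqrt (by linarith [gt2le (γ := γ) ht])
  have hγ2 : 0 < Real.sqrt (1-γ^2) := Real.sqrt_pos.2 (by nlinarith)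
  have hst : 0 < Real.sqrt (1-t) := Real.sqrt_pos.2 h1
  rw [rpow_half_eq h1.le]
  have hd : Real.sqrt (1-t) * (Real.sqrt (1-γ^2))^k ≤
      Real.sqrt (1-t^2) * Real.sqrt (1-γ^2*t^2)^k :=
    mul_le_mul hsl (pow_le_pow_left₀ hγ2.le hrl k) (by positivity) (by positivity)
  calc 1 / (Real.sqrt (1-t^2) * Real.sqrt (1-γ^2*t^2)^k)
      ≤ 1 / (Real.sqrt (1-t) * (Real.sqrt (1-γ^2))^k) :=
        one_div_le_one_div_of_le (by positivity) hd
    _ = ((Real.sqrt (1-γ^2))^k)⁻¹ * (Real.sqrt (1-t))⁻¹ := by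
        rw [one_div, mul_inv, mul_comm]

section
variable {γ : ℝ} (hγ0 : 0 ≤ γ) (hγ1 : γ < 1)
include hγ0 hγ1

lemma iiK : IntervalIntegrable (wK γ) volume 0 1 := by
  refine II_of_bound _ (((Real.sqrt (1-γ^2))^1)⁻¹) ?_ ?_
  · exact (Measurable.aestronglyMeasurable (by unfold wK; fun_prop))
  · intro t ht
    have hs := s_pos ht; have hr := r_pos (hγsq hγ0 hγ1) ht
    have h := key_bound hγ0 hγ1 ht 1
    unfold wK
    rw [Real.sqrt_mul (by nlinarith [t2lt1 ht] : (0:ℝ) ≤ 1 - t^2), abs_of_nonneg (by positivity)]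
    simpa using h

lemma iiE : IntervalIntegrable (wE γ) volume 0 1 := by
  refine II_of_bound _ 1 ?_ ?_
  · exact (Measurable.aestronglyMeasurable (by unfold wE; fun_prop))
  · intro t ht
    have hs := s_pos ht; have hr := r_pos (hγsq hγ0 hγ1) ht
    have h1 : (0:ℝ) < 1 - t := by linarith [ht.2]
    have hsl : Real.sqrt (1-t) ≤ Real.sqrt (1-t^2) :=
      Real.sqrt_le_sqrt (by nlinarith [ht.1, ht.2])
    have hst : 0 < Real.sqrt (1-t) := Real.sqrt_pos.2 h1
    have hrle : Real.sqrt (1-γ^2*t^2) ≤ 1 :=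
      Real.sqrt_le_one.mpr (by nlinarith [sq_nonneg (γ*t)])
    unfold wE
    rw [rpow_half_eq h1.le, abs_of_nonneg (by positivity), one_mul]
    calc Real.sqrt (1-γ^2*t^2) / Real.sqrt (1-t^2) ≤ 1 / Real.sqrt (1-t) :=
          div_le_div₀ zero_le_one hrle hst hsl
      _ = (Real.sqrt (1-t))⁻¹ := one_div _

lemma iiA : IntervalIntegrable (wA γ) volume 0 1 := by
  refine II_of_bound _ (((Real.sqrt (1-γ^2))^3)⁻¹) ?_ ?_
  · exact (Measurable.aestronglyMeasurable (by unfold wA; fun_prop))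
  · intro t ht
    have hs := s_pos ht; have hr := r_pos (hγsq hγ0 hγ1) ht
    have h := key_bound hγ0 hγ1 ht 3
    unfold wA
    rw [abs_of_nonneg (by positivity)]
    refine le_trans ?_ h
    exact div_le_div₀ zero_le_one (t2lt1 ht).le (by positivity) le_rfl

lemma iiB : IntervalIntegrable (wB γ) volume 0 1 := by
  refine II_of_bound _ (((Real.sqrt (1-γ^2))^1)⁻¹) ?_ ?_
  · exact (Measurable.aestronglyMeasurable (by unfold wB; fun_prop))
  · intro t ht
    have hs := s_pos ht; have hr := r_pos (hγsq hγ0 hγ1) ht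
    have h := key_bound hγ0 hγ1 ht 1
    unfold wB
    rw [abs_of_nonneg (by positivity)]
    refine le_trans ?_ h
    rw [pow_one]
    exact div_le_div₀ zero_le_one (t2lt1 ht).le (by positivity) le_rfl

lemma iiC : IntervalIntegrable (wC γ) volume 0 1 := by
  refine II_of_bound _ ((Real.sqrt (1-γ^2))⁻¹) ?_ ?_
  · exact (Measurable.aestronglyMeasurable (by unfold wC; fun_prop))
  · intro t ht
    have hs := s_pos ht; have hr := r_pos (hγsq hγ0 hγ1) ht
    have h1 : (0:ℝ) < 1 - t := by linarith [ht.2]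
    have hγ2 : 0 < Real.sqrt (1-γ^2) := Real.sqrt_pos.2 (by nlinarith)
    have hrl : Real.sqrt (1-γ^2) ≤ Real.sqrt (1-γ^2*t^2) :=
      Real.sqrt_le_sqrt (by linarith [gt2le (γ := γ) ht])
    have hsle : Real.sqrt (1-t^2) ≤ 1 := Real.sqrt_le_one.mpr (by nlinarith [t2lt1 ht])
    have hst : 0 < Real.sqrt (1-t) := Real.sqrt_pos.2 h1
    have hrp : (1:ℝ) ≤ (1-t) ^ (-(1/2):ℝ) := by
      rw [rpow_half_eq h1.le]
      calc (1:ℝ) = (1:ℝ)⁻¹ := by norm_num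
        _ ≤ (Real.sqrt (1-t))⁻¹ := by
            apply inv_anti₀ hst (Real.sqrt_le_one.mpr (by linarith [ht.1]))
    unfold wC
    rw [abs_of_nonneg (by positivity)]
    calc Real.sqrt (1-t^2) / Real.sqrt (1-γ^2*t^2) ≤ 1 / Real.sqrt (1-γ^2) :=
          div_le_div₀ zero_le_one hsle hγ2 hrl
      _ = (Real.sqrt (1-γ^2))⁻¹ * 1 := by rw [one_div, mul_one]
      _ ≤ (Real.sqrt (1-γ^2))⁻¹ * (1-t) ^ (-(1/2):ℝ) :=
          mul_le_mul_of_nonneg_left hrp (by positivity)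

lemma iiD : IntervalIntegrable (wD γ) volume 0 1 := by
  refine II_of_bound _ (((Real.sqrt (1-γ^2))^3)⁻¹) ?_ ?_
  · exact (Measurable.aestronglyMeasurable (by unfold wD; fun_prop))
  · intro t ht
    have hs := s_pos ht; have hr := r_pos (hγsq hγ0 hγ1) ht
    have h := key_bound hγ0 hγ1 ht 3
    have hsle : Real.sqrt (1-t^2) ≤ 1 := Real.sqrt_le_one.mpr (by nlinarith [t2lt1 ht])
    unfold wD
    rw [abs_of_nonneg (by positivity)]
    refine le_trans ?_ h
    have hs2 : Real.sqrt (1 - t^2) ^ 2 = 1 - t^2 := Real.sq_sqrt (by nlinarith [t2lt1 ht])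
    have h1' : (0:ℝ) ≤ 1 - t^2 * Real.sqrt (1-t^2)^2 := by
      rw [hs2]; nlinarith [sq_nonneg (t^2 - 1/2)]
    rw [div_le_div_iff₀ (by positivity) (by positivity)]
    nlinarith [mul_nonneg h1' (pow_pos hr 3).le]

lemma iiG : IntervalIntegrable (wG γ) volume 0 1 := by
  refine II_of_bound _ (4 * ((Real.sqrt (1-γ^2))^3)⁻¹) ?_ ?_
  · exact (Measurable.aestronglyMeasurable (by unfold wG; fun_prop))
  · intro t ht
    have hs := s_pos ht; have hr := r_pos (hγsq hγ0 hγ1) ht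
    have h := key_bound hγ0 hγ1 ht 3
    have h1 : (0:ℝ) < 1 - t := by linarith [ht.2]
    have hg2 : γ^2 ≤ 1 := (hγsq hγ0 hγ1).le
    have ht4 : t^4 ≤ 1 := by nlinarith [t2lt1 ht, sq_nonneg t]
    have hgt4 : γ^2 * t^4 ≤ 1 := mul_le_one₀ hg2 (by positivity) ht4
    unfold wG
    rw [abs_div, abs_of_nonneg (by positivity : (0:ℝ) ≤ Real.sqrt (1-t^2) * Real.sqrt (1-γ^2*t^2)^3)]
    have hnum : |1 - 2*t^2 + γ^2*t^4| ≤ 4 := by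
      rw [abs_le]
      constructor
      · nlinarith [t2lt1 ht, sq_nonneg (γ*t^2)]
      · nlinarith [ht.1, sq_nonneg t]
    calc |1 - 2*t^2 + γ^2*t^4| / (Real.sqrt (1-t^2) * Real.sqrt (1-γ^2*t^2)^3)
        ≤ 4 / (Real.sqrt (1-t^2) * Real.sqrt (1-γ^2*t^2)^3) :=
          div_le_div₀ (by norm_num) hnum (by positivity) le_rfl
      _ = 4 * (1 / (Real.sqrt (1-t^2) * Real.sqrt (1-γ^2*t^2)^3)) := by ring
      _ ≤ 4 * (((Real.sqrt (1-γ^2))^3)⁻¹ * (1-t) ^ (-(1/2):ℝ)) :=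
          mul_le_mul_of_nonneg_left h (by norm_num)
      _ = 4 * ((Real.sqrt (1-γ^2))^3)⁻¹ * (1-t) ^ (-(1/2):ℝ) := by ring

end

lemma ellK_eq (γ : ℝ) : ellK γ = ∫ t in (0:ℝ)..1, wK γ t := rfl
lemma ellE_eq (γ : ℝ) : ellE γ = ∫ t in (0:ℝ)..1, wE γ t := rfl

section
variable {γ : ℝ} (hγ0 : 0 ≤ γ) (hγ1 : γ < 1)
include hγ0 hγ1

-- the FTC lemma : ∫ wG = 0
lemma intG_eq_zero : (∫ t in (0:ℝ)..1, wG γ t) = 0 := by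
  have hrpos : ∀ t ∈ Icc (0:ℝ) 1, 0 < Real.sqrt (1-γ^2*t^2) := by
    intro t ht
    apply Real.sqrt_pos.2
    have := mul_le_of_le_one_right (sq_nonneg γ) (show t^2 ≤ 1 by nlinarith [ht.1, ht.2])
    linarith [hγsq hγ0 hγ1]
  have hcont : ContinuousOn (fun t : ℝ => t * Real.sqrt (1-t^2) / Real.sqrt (1-γ^2*t^2))
      (Icc 0 1) := by
    apply ContinuousOn.div
    · exact (continuous_id.mul (Real.continuous_sqrt.comp (by continuity))).continuousOn
    · exact (Real.continuous_sqrt.comp (by continuity)).continuousOn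
    · exact fun t ht => (hrpos t ht).ne'
  have hderiv : ∀ t ∈ Ioo (0:ℝ) 1,
      HasDerivAt (fun t : ℝ => t * Real.sqrt (1-t^2) / Real.sqrt (1-γ^2*t^2)) (wG γ t) t := by
    intro t ht
    have hs := s_pos ht; have hr := r_pos (hγsq hγ0 hγ1) ht
    have hs2 : Real.sqrt (1 - t^2) ^ 2 = 1 - t^2 := Real.sq_sqrt (by nlinarith [t2lt1 ht])
    have hr2 : Real.sqrt (1 - γ^2*t^2) ^ 2 = 1 - γ^2*t^2 :=
      Real.sq_sqrt (by nlinarith [gt2le (γ := γ) ht, hγsq hγ0 hγ1])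
    have h1 : HasDerivAt (fun t : ℝ => 1 - t^2) (-(2*t^1)) t :=
      (hasDerivAt_pow 2 t).const_sub 1
    have h2 : HasDerivAt (fun t : ℝ => 1 - γ^2*t^2) (-(γ^2*(2*t^1))) t :=
      ((hasDerivAt_pow 2 t).const_mul (γ^2)).const_sub 1
    have hnum : HasDerivAt (fun t : ℝ => t * Real.sqrt (1-t^2))
        (1 * Real.sqrt (1-t^2) + t * ((-(2*t^1)) / (2 * Real.sqrt (1-t^2)))) t :=
      (hasDerivAt_id t).mul (h1.sqrt (by nlinarith [t2lt1 ht] : (1:ℝ) - t^2 ≠ 0))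
    have hden : HasDerivAt (fun t : ℝ => Real.sqrt (1-γ^2*t^2))
        ((-(γ^2*(2*t^1))) / (2 * Real.sqrt (1-γ^2*t^2))) t := h2.sqrt (by nlinarith [gt2le (γ := γ) ht, hγsq hγ0 hγ1] : (1:ℝ) - γ^2*t^2 ≠ 0)
    have := hnum.div hden hr.ne'
    refine this.congr_deriv ?_
    symm
    unfold wG
    field_simp
    have hr2' : Real.sqrt (1 - t^2*γ^2) ^ 2 = 1 - t^2*γ^2 := by
      rw [show t^2*γ^2 = γ^2*t^2 by ring]; exact hr2
    congr 1
    linear_combination (-(Real.sqrt (1-t^2)^2 - t^2)) * hr2' - hs2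
  have := intervalIntegral.integral_eq_sub_of_hasDeriv_right_of_le (by norm_num) hcont
    (fun t ht => (hderiv t ht).hasDerivWithinAt) (iiG hγ0 hγ1)
  rw [this]
  norm_num

lemma posK : 0 < ellK γ := by
  rw [ellK_eq]
  refine intervalIntegral.intervalIntegral_pos_of_pos_on (iiK hγ0 hγ1) ?_ one_pos
  intro t ht
  have hs := s_pos ht; have hr := r_pos (hγsq hγ0 hγ1) ht
  unfold wK
  rw [Real.sqrt_mul (by nlinarith [t2lt1 ht] : (0:ℝ) ≤ 1 - t^2)]
  positivity

lemma posC : 0 < ∫ t in (0:ℝ)..1, wC γ t := by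
  refine intervalIntegral.intervalIntegral_pos_of_pos_on (iiC hγ0 hγ1) ?_ one_pos
  intro t ht
  have hs := s_pos ht; have hr := r_pos (hγsq hγ0 hγ1) ht
  unfold wC; positivity

lemma posD : 0 < ∫ t in (0:ℝ)..1, wD γ t := by
  refine intervalIntegral.intervalIntegral_pos_of_pos_on (iiD hγ0 hγ1) ?_ one_pos
  intro t ht
  have hs := s_pos ht; have hr := r_pos (hγsq hγ0 hγ1) ht
  have ht0 := ht.1
  unfold wD; positivity

lemma rel1 : ellE γ - ellK γ = -(γ^2) * ∫ t in (0:ℝ)..1, wB γ t := by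
  rw [ellE_eq, ellK_eq, ← intervalIntegral.integral_sub (iiE hγ0 hγ1) (iiK hγ0 hγ1),
    ← intervalIntegral.integral_const_mul]
  exact intervalIntegral.integral_congr_ae
    (ae_uIoc_of_Ioo _ (fun t ht => alg1 (hγsq hγ0 hγ1) ht))

lemma rel2 : ellE γ - (1-γ^2) * ellK γ = γ^2 * ∫ t in (0:ℝ)..1, wC γ t := by
  rw [ellE_eq, ellK_eq, ← intervalIntegral.integral_const_mul,
    ← intervalIntegral.integral_sub (iiE hγ0 hγ1) ((iiK hγ0 hγ1).const_mul _),
    ← intervalIntegral.integral_const_mul]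
  exact intervalIntegral.integral_congr_ae
    (ae_uIoc_of_Ioo _ (fun t ht => alg2 (hγsq hγ0 hγ1) ht))

lemma rel3 : (∫ t in (0:ℝ)..1, wC γ t) = (1-γ^2) * ∫ t in (0:ℝ)..1, wA γ t := by
  have h0 := intG_eq_zero hγ0 hγ1
  have : (∫ t in (0:ℝ)..1, wG γ t) =
      (∫ t in (0:ℝ)..1, wC γ t) - (1-γ^2) * ∫ t in (0:ℝ)..1, wA γ t := by
    rw [← intervalIntegral.integral_const_mul,
      ← intervalIntegral.integral_sub (iiC hγ0 hγ1) ((iiA hγ0 hγ1).const_mul _)]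
    exact (intervalIntegral.integral_congr_ae
      (ae_uIoc_of_Ioo _ (fun t ht => alg3 (hγsq hγ0 hγ1) ht))).symm
  rw [h0] at this
  linarith

lemma rel4 : 2 * (∫ t in (0:ℝ)..1, wB γ t) - ellK γ = γ^2 * ∫ t in (0:ℝ)..1, wD γ t := by
  have h0 := intG_eq_zero hγ0 hγ1
  have key : (∫ t in (0:ℝ)..1, (2 * wB γ t - wK γ t)) =
      ∫ t in (0:ℝ)..1, (γ^2 * wD γ t - wG γ t) := by
    apply intervalIntegral.integral_congr_ae
    apply ae_uIoc_of_Ioo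
    intro t ht
    have h4 := alg4 (hγsq hγ0 hγ1) ht
    have h5 := alg5 (hγsq hγ0 hγ1) ht
    nlinarith [h4, h5]
  rw [intervalIntegral.integral_sub ((iiB hγ0 hγ1).const_mul 2) (iiK hγ0 hγ1),
    intervalIntegral.integral_sub ((iiD hγ0 hγ1).const_mul _) (iiG hγ0 hγ1), h0,
    intervalIntegral.integral_const_mul, intervalIntegral.integral_const_mul] at key
  rw [← ellK_eq] at key
  linarith [key]

end

section
variable {γ : ℝ} (hγ0 : 0 < γ) (hγ1 : γ < 1)
include hγ0 hγ1

lemma ineq1 : (1-γ^2) * ellK γ < ellE γ := by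
  have h2 := rel2 hγ0.le hγ1
  have hc := posC hγ0.le hγ1
  nlinarith [mul_pos (mul_pos hγ0 hγ0) hc]

lemma ineq2 : 2 * ellE γ < (2-γ^2) * ellK γ := by
  have h1 := rel1 hγ0.le hγ1
  have h4 := rel4 hγ0.le hγ1
  have hd := posD hγ0.le hγ1
  have key : 2 * ellE γ - (2-γ^2) * ellK γ = -(γ^4 * ∫ t in (0:ℝ)..1, wD γ t) := by
    linear_combination 2 * h1 - γ^2 * h4
  nlinarith [mul_pos (mul_pos (mul_pos hγ0 hγ0) (mul_pos hγ0 hγ0)) hd]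

end

lemma ii_bound_fun (c : ℝ) : IntervalIntegrable (fun t : ℝ => c * (1-t)^(-(1/2):ℝ)) volume 0 1 := by
  have h0 : IntervalIntegrable (fun x : ℝ => x ^ (-(1/2) : ℝ)) volume 0 1 :=
    intervalIntegral.intervalIntegrable_rpow' (by norm_num)
  have h1 := (h0.comp_sub_left 1)
  simp only [sub_self, sub_zero] at h1
  exact (h1.symm).const_mul c

section
variable {γ : ℝ} (hγ0 : 0 ≤ γ) (hγ1 : γ < 1)
include hγ0 hγ1

lemma hasDerivAt_ellK :
    HasDerivAt ellK (γ * ∫ t in (0:ℝ)..1, wA γ t) γ := by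
  have hε : (0:ℝ) < (1-γ)/2 := by linarith
  have hδ0 : (0:ℝ) ≤ (1+γ)/2 := by linarith
  have hδ1 : (1+γ)/2 < 1 := by linarith
  have hball : ∀ x ∈ Metric.ball γ ((1-γ)/2), |x| ≤ (1+γ)/2 := by
    intro x hx
    rw [Metric.mem_ball, Real.dist_eq] at hx
    rw [abs_le]; rw [abs_lt] at hx
    constructor <;> nlinarith
  have main := intervalIntegral.hasDerivAt_integral_of_dominated_loc_of_deriv_le
    (F := fun x t => wK x t) (F' := fun x t => x * wA x t)
    (bound := fun t => ((Real.sqrt (1-((1+γ)/2)^2))^3)⁻¹ * (1-t)^(-(1/2):ℝ))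
    (μ := volume) (a := 0) (b := 1) (x₀ := γ) (Metric.ball_mem_nhds γ hε)
    (Filter.Eventually.of_forall (fun x =>
      Measurable.aestronglyMeasurable (by unfold wK; fun_prop)))
    (iiK hγ0 hγ1)
    (Measurable.aestronglyMeasurable (by unfold wA; fun_prop))
    ?_ (ii_bound_fun _) ?_
  · obtain ⟨-, h⟩ := main
    rw [intervalIntegral.integral_const_mul] at h
    exact h
  · -- bound
    apply ae_uIoc_of_Ioo
    intro t ht x hx
    have hxδ := hball x hx
    have hs := s_pos ht
    have hxsq : x^2 ≤ ((1+γ)/2)^2 := by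
      nlinarith [sq_abs x, mul_self_le_mul_self (abs_nonneg x) hxδ]
    have hrmono : Real.sqrt (1-((1+γ)/2)^2*t^2) ≤ Real.sqrt (1-x^2*t^2) :=
      Real.sqrt_le_sqrt (by nlinarith [mul_le_mul_of_nonneg_right hxsq (sq_nonneg t)])
    have hrδ : 0 < Real.sqrt (1-((1+γ)/2)^2*t^2) := r_pos (hγsq hδ0 hδ1) ht
    have key := key_bound hδ0 hδ1 ht 3
    refine le_trans ?_ key
    have hwa : 0 ≤ wA x t := by
      unfold wA
      positivity
    rw [Real.norm_eq_abs, abs_mul, abs_of_nonneg hwa]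
    unfold wA
    rw [← mul_div_assoc]
    apply div_le_div₀ zero_le_one ?_ (by positivity) ?_
    · calc |x| * t^2 ≤ 1 * 1 :=
          mul_le_mul (le_trans hxδ hδ1.le) (t2lt1 ht).le (by positivity) zero_le_one
        _ = 1 := by norm_num
    · exact mul_le_mul_of_nonneg_left (pow_le_pow_left₀ hrδ.le hrmono 3) hs.le
  · -- differentiability
    apply ae_uIoc_of_Ioo
    intro t ht x hx
    have hxδ := hball x hx
    have hxsq : x^2 ≤ ((1+γ)/2)^2 := by
      nlinarith [sq_abs x, mul_self_le_mul_self (abs_nonneg x) hxδ]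
    have hx2 : x^2*t^2 < 1 := by
      have h1 : x^2*t^2 ≤ ((1+γ)/2)^2*t^2 := mul_le_mul_of_nonneg_right hxsq (sq_nonneg t)
      have h2 : ((1+γ)/2)^2*t^2 ≤ ((1+γ)/2)^2 :=
        mul_le_of_le_one_right (by positivity) (t2lt1 ht).le
      nlinarith
    have hs := s_pos ht
    have hr : 0 < Real.sqrt (1-x^2*t^2) := Real.sqrt_pos.2 (by linarith)
    have hs2 : Real.sqrt (1 - t^2) ^ 2 = 1 - t^2 := Real.sq_sqrt (by nlinarith [t2lt1 ht])
    have hr2 : Real.sqrt (1 - x^2*t^2) ^ 2 = 1 - x^2*t^2 := Real.sq_sqrt (by linarith)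
    have hu : HasDerivAt (fun x : ℝ => (1-t^2)*(1-x^2*t^2))
        ((1-t^2) * (-(2*x^1*t^2))) x :=
      (((hasDerivAt_pow 2 x).mul_const (t^2)).const_sub 1).const_mul (1-t^2)
    have hupos : (0:ℝ) < (1-t^2)*(1-x^2*t^2) := by nlinarith [t2lt1 ht]
    have hsq := hu.sqrt hupos.ne'
    have hF : HasDerivAt (fun x : ℝ => wK x t)
        ((0 * Real.sqrt ((1-t^2)*(1-x^2*t^2)) -
          1 * ((1-t^2) * (-(2*x^1*t^2)) / (2 * Real.sqrt ((1-t^2)*(1-x^2*t^2))))) /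
          Real.sqrt ((1-t^2)*(1-x^2*t^2)) ^ 2) x := by
      unfold wK
      exact (hasDerivAt_const x (1:ℝ)).div hsq
        (Real.sqrt_pos.2 hupos).ne'
    refine hF.congr_deriv ?_
    symm
    unfold wA
    rw [Real.sqrt_mul (by nlinarith [t2lt1 ht] : (0:ℝ) ≤ 1 - t^2)]
    field_simp
    linear_combination x*t^2 * hs2

end

lemma hasDerivAt_ellE {γ : ℝ} (hγ0 : 0 ≤ γ) (hγ1 : γ < 1) :
    HasDerivAt ellE (-(γ * ∫ t in (0:ℝ)..1, wB γ t)) γ := by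
  have hε : (0:ℝ) < (1-γ)/2 := by linarith
  have hδ0 : (0:ℝ) ≤ (1+γ)/2 := by linarith
  have hδ1 : (1+γ)/2 < 1 := by linarith
  have hball : ∀ x ∈ Metric.ball γ ((1-γ)/2), |x| ≤ (1+γ)/2 := by
    intro x hx
    rw [Metric.mem_ball, Real.dist_eq] at hx
    rw [abs_le]; rw [abs_lt] at hx
    constructor <;> nlinarith
  have main := intervalIntegral.hasDerivAt_integral_of_dominated_loc_of_deriv_le
    (F := fun x t => wE x t) (F' := fun x t => -(x * wB x t))
    (bound := fun t => ((Real.sqrt (1-((1+γ)/2)^2))^1)⁻¹ * (1-t)^(-(1/2):ℝ))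
    (μ := volume) (a := 0) (b := 1) (x₀ := γ) (Metric.ball_mem_nhds γ hε)
    (Filter.Eventually.of_forall (fun x =>
      Measurable.aestronglyMeasurable (by unfold wE; fun_prop)))
    (iiE hγ0 hγ1)
    (Measurable.aestronglyMeasurable (by unfold wB; fun_prop))
    ?_ (ii_bound_fun _) ?_
  · obtain ⟨-, h⟩ := main
    rw [intervalIntegral.integral_neg, intervalIntegral.integral_const_mul] at h
    exact h
  · -- bound
    apply ae_uIoc_of_Ioo
    intro t ht x hx
    have hxδ := hball x hx
    have hs := s_pos ht
    have hxsq : x^2 ≤ ((1+γ)/2)^2 := by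
      nlinarith [sq_abs x, mul_self_le_mul_self (abs_nonneg x) hxδ]
    have hrmono : Real.sqrt (1-((1+γ)/2)^2*t^2) ≤ Real.sqrt (1-x^2*t^2) :=
      Real.sqrt_le_sqrt (by nlinarith [mul_le_mul_of_nonneg_right hxsq (sq_nonneg t)])
    have hrδ : 0 < Real.sqrt (1-((1+γ)/2)^2*t^2) := r_pos (hγsq hδ0 hδ1) ht
    have key := key_bound hδ0 hδ1 ht 1
    refine le_trans ?_ key
    have hwb : 0 ≤ wB x t := by unfold wB; positivity
    rw [Real.norm_eq_abs, abs_neg, abs_mul, abs_of_nonneg hwb]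
    unfold wB
    rw [← mul_div_assoc]
    apply div_le_div₀ zero_le_one ?_ (by positivity) ?_
    · calc |x| * t^2 ≤ 1 * 1 :=
          mul_le_mul (le_trans hxδ hδ1.le) (t2lt1 ht).le (by positivity) zero_le_one
        _ = 1 := by norm_num
    · rw [pow_one]
      exact mul_le_mul_of_nonneg_left hrmono hs.le
  · -- differentiability
    apply ae_uIoc_of_Ioo
    intro t ht x hx
    have hxδ := hball x hx
    have hxsq : x^2 ≤ ((1+γ)/2)^2 := by
      nlinarith [sq_abs x, mul_self_le_mul_self (abs_nonneg x) hxδ]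
    have hx2 : x^2*t^2 < 1 := by
      have h1 : x^2*t^2 ≤ ((1+γ)/2)^2*t^2 := mul_le_mul_of_nonneg_right hxsq (sq_nonneg t)
      have h2 : ((1+γ)/2)^2*t^2 ≤ ((1+γ)/2)^2 :=
        mul_le_of_le_one_right (by positivity) (t2lt1 ht).le
      nlinarith
    have hs := s_pos ht
    have hr : 0 < Real.sqrt (1-x^2*t^2) := Real.sqrt_pos.2 (by linarith)
    have hu : HasDerivAt (fun x : ℝ => 1 - x^2*t^2) (-(2*x^1*t^2)) x :=
      ((hasDerivAt_pow 2 x).mul_const (t^2)).const_sub 1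
    have hsq := hu.sqrt (by linarith : (1:ℝ) - x^2*t^2 ≠ 0)
    have hF : HasDerivAt (fun x : ℝ => wE x t)
        ((-(2*x^1*t^2) / (2 * Real.sqrt (1-x^2*t^2))) / Real.sqrt (1-t^2)) x := by
      unfold wE
      exact hsq.div_const _
    refine hF.congr_deriv ?_
    symm
    unfold wB
    field_simp

lemma hasDerivAt_H {γ : ℝ} (hγ0 : 0 ≤ γ) (hγ1 : γ < 1) :
    HasDerivAt (fun x : ℝ => ((x^2 - 2) * ellK x + 3 * ellE x) * ellK x)
      ((2*γ*ellK γ + (γ^2-2)*(γ*∫ t in (0:ℝ)..1, wA γ t)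
          - 3*(γ*∫ t in (0:ℝ)..1, wB γ t))*ellK γ
        + ((γ^2-2)*ellK γ + 3*ellE γ)*(γ*∫ t in (0:ℝ)..1, wA γ t)) γ := by
  have hK := hasDerivAt_ellK hγ0 hγ1
  have hE := hasDerivAt_ellE hγ0 hγ1
  have h1 : HasDerivAt (fun x : ℝ => x^2 - 2) (2*γ) γ := by
    simpa using (hasDerivAt_pow 2 γ).sub_const 2
  have h2 := ((h1.mul hK).add (hE.const_mul 3)).mul hK
  refine h2.congr_deriv ?_
  symm
  simp only [Pi.add_apply, Pi.mul_apply]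
  ring

lemma derivH_neg {γ : ℝ} (hγ0 : 0 < γ) (hγ1 : γ < 1) :
    (2*γ*ellK γ + (γ^2-2)*(γ*∫ t in (0:ℝ)..1, wA γ t)
          - 3*(γ*∫ t in (0:ℝ)..1, wB γ t))*ellK γ
        + ((γ^2-2)*ellK γ + 3*ellE γ)*(γ*∫ t in (0:ℝ)..1, wA γ t) < 0 := by
  have hK := posK hγ0.le hγ1
  have i1 := ineq1 hγ0 hγ1
  have i2 := ineq2 hγ0 hγ1
  have e1 := rel1 hγ0.le hγ1
  have e2 := rel2 hγ0.le hγ1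
  have e3 := rel3 hγ0.le hγ1
  have hm1 : (0:ℝ) < 1 - γ^2 := by nlinarith
  have eA : γ^2*(1-γ^2)*(∫ t in (0:ℝ)..1, wA γ t) = ellE γ - (1-γ^2)*ellK γ := by
    linear_combination -e2 - γ^2*e3
  have eB : γ^2*(∫ t in (0:ℝ)..1, wB γ t) = ellK γ - ellE γ := by linear_combination e1
  have hQ : 3*(ellE γ)^2 - 2*(2-γ^2)*(ellE γ)*(ellK γ) + (1-γ^2)*(ellK γ)^2 < 0 := by
    nlinarith [mul_pos (sub_pos.2 i1) (sub_pos.2 i2),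
      mul_pos (mul_pos hK hK) (sub_pos.2 i2),
      mul_pos (mul_pos hK hK) (sub_pos.2 i1),
      mul_pos (mul_pos hγ0 hγ0) hm1,
      mul_pos (mul_pos hγ0 hγ0) (mul_pos hγ0 hγ0),
      mul_pos (mul_pos hγ0 hγ0) hK,
      mul_pos hK hK, mul_pos hγ0 hγ0]
  have eD : γ*(1-γ^2)*((2*γ*ellK γ + (γ^2-2)*(γ*∫ t in (0:ℝ)..1, wA γ t)
          - 3*(γ*∫ t in (0:ℝ)..1, wB γ t))*ellK γ
        + ((γ^2-2)*ellK γ + 3*ellE γ)*(γ*∫ t in (0:ℝ)..1, wA γ t)) =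
      3*(ellE γ)^2 - 2*(2-γ^2)*(ellE γ)*(ellK γ) + (1-γ^2)*(ellK γ)^2 := by
    linear_combination (2*(γ^2-2)*ellK γ + 3*ellE γ)*eA - 3*(1-γ^2)*ellK γ*eB
  nlinarith [mul_pos hγ0 hm1]

lemma ii_arcsin : IntervalIntegrable (fun t : ℝ => 1/Real.sqrt (1-t^2)) volume 0 1 := by
  refine II_of_bound _ 1 (Measurable.aestronglyMeasurable (by fun_prop)) ?_
  intro t ht
  have hs := s_pos ht
  have h1 : (0:ℝ) < 1 - t := by linarith [ht.2]
  have hsl : Real.sqrt (1-t) ≤ Real.sqrt (1-t^2) :=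
    Real.sqrt_le_sqrt (by nlinarith [ht.1, ht.2])
  have hst : 0 < Real.sqrt (1-t) := Real.sqrt_pos.2 h1
  rw [rpow_half_eq h1.le, abs_of_nonneg (by positivity), one_mul, ← one_div]
  exact one_div_le_one_div_of_le hst hsl

lemma integral_arcsin : (∫ t in (0:ℝ)..1, 1/Real.sqrt (1-t^2)) = π/2 := by
  have h := intervalIntegral.integral_eq_sub_of_hasDeriv_right_of_le (by norm_num : (0:ℝ) ≤ 1)
    (Real.continuous_arcsin.continuousOn)
    (fun t ht => (Real.hasDerivAt_arcsin (by linarith [ht.1] : t ≠ -1)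
      (ne_of_lt ht.2)).hasDerivWithinAt)
    ii_arcsin
  rw [h, Real.arcsin_one, Real.arcsin_zero, sub_zero]

lemma ellK_zero : ellK 0 = π/2 := by
  rw [show ellK 0 = ∫ t in (0:ℝ)..1, 1/Real.sqrt (1-t^2) from by
    unfold ellK; congr 1; funext t; norm_num]
  exact integral_arcsin

lemma ellE_zero : ellE 0 = π/2 := by
  rw [show ellE 0 = ∫ t in (0:ℝ)..1, 1/Real.sqrt (1-t^2) from by
    unfold ellE; congr 1; funext t; norm_num]
  exact integral_arcsin

lemma ellE_le {γ : ℝ} (hγ0 : 0 ≤ γ) (hγ1 : γ < 1) : ellE γ ≤ π/2 := by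
  rw [← integral_arcsin, ellE_eq]
  refine intervalIntegral.integral_mono_on (by norm_num) (iiE hγ0 hγ1) ii_arcsin ?_
  intro t ht
  unfold wE
  rcases eq_or_lt_of_le (Real.sqrt_nonneg (1-t^2)) with h | h
  · rw [← h, div_zero, div_zero]
  · exact (div_le_div_iff_of_pos_right h).mpr (Real.sqrt_le_one.mpr (by nlinarith [sq_nonneg (γ*t)]))

lemma ae_Icc_of_Ico (P : ℝ → Prop) (h : ∀ t ∈ Ico (0:ℝ) 1, P t) :
    ∀ᵐ t ∂(volume.restrict (Icc (0:ℝ) 1)), P t := by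
  have h2 : ∀ᵐ t ∂(volume : Measure ℝ), t ≠ 1 := by
    rw [ae_iff]; simp [Real.volume_singleton]
  filter_upwards [ae_restrict_mem measurableSet_Icc, ae_restrict_of_ae h2] with t ht ht1
  exact h t ⟨ht.1, lt_of_le_of_ne ht.2 ht1⟩

lemma integral_one_div_one_sub_mul {γ : ℝ} (hγ0 : 0 < γ) (hγ1 : γ < 1) :
    (∫ t in (0:ℝ)..1, (1-γ*t)⁻¹) = -Real.log (1-γ)/γ := by
  have hpos : ∀ t ∈ Set.uIcc (0:ℝ) 1, (0:ℝ) < 1 - γ*t := by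
    intro t ht
    rw [Set.uIcc_of_le (by norm_num : (0:ℝ) ≤ 1)] at ht
    nlinarith [ht.1, ht.2, mul_le_of_le_one_right hγ0.le ht.2]
  have hderiv : ∀ t ∈ Set.uIcc (0:ℝ) 1,
      HasDerivAt (fun t : ℝ => -(Real.log (1-γ*t))/γ) ((1-γ*t)⁻¹) t := by
    intro t ht
    have h1 : HasDerivAt (fun t : ℝ => 1-γ*t) (-(γ*1)) t :=
      ((hasDerivAt_id t).const_mul γ).const_sub 1
    have h2 := (Real.hasDerivAt_log (hpos t ht).ne').comp t h1
    have h3 := (h2.neg).div_const γ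
    refine h3.congr_deriv ?_
    symm
    have hne := (hpos t ht).ne'
    have hγne := hγ0.ne'
    field_simp
  have hint : IntervalIntegrable (fun t : ℝ => (1-γ*t)⁻¹) volume 0 1 := by
    apply ContinuousOn.intervalIntegrable
    exact ContinuousOn.inv₀ (by continuity : Continuous fun t : ℝ => 1-γ*t).continuousOn
      (fun t ht => (hpos t ht).ne')
  rw [intervalIntegral.integral_eq_sub_of_hasDerivAt hderiv hint]
  norm_num

lemma K_lower {γ : ℝ} (hγ0 : 0 < γ) (hγ1 : γ < 1) :
    -Real.log (1-γ)/(2*γ) ≤ ellK γ := by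
  have hposc : ∀ t ∈ Set.uIcc (0:ℝ) 1, (0:ℝ) < 1 - γ*t := by
    intro t ht
    rw [Set.uIcc_of_le (by norm_num : (0:ℝ) ≤ 1)] at ht
    nlinarith [ht.1, ht.2, mul_le_of_le_one_right hγ0.le ht.2]
  have hint : IntervalIntegrable (fun t : ℝ => (2*(1-γ*t))⁻¹) volume 0 1 := by
    apply ContinuousOn.intervalIntegrable
    apply ContinuousOn.inv₀ (by continuity : Continuous fun t : ℝ => 2*(1-γ*t)).continuousOn
    intro t ht
    have := hposc t ht
    positivity
  have hmono : (∫ t in (0:ℝ)..1, (2*(1-γ*t))⁻¹) ≤ ∫ t in (0:ℝ)..1, wK γ t := by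
    refine intervalIntegral.integral_mono_ae_restrict (by norm_num) hint (iiK hγ0.le hγ1) ?_
    apply ae_Icc_of_Ico
    intro t ht
    have ht0 := ht.1
    have ht1 := ht.2
    have h1 : (0:ℝ) < 1 - γ*t := by nlinarith [mul_le_of_le_one_right hγ0.le ht1.le]
    have h2 : (0:ℝ) < 1 - t^2 := by nlinarith
    have hga : γ*t ≤ t := mul_le_of_le_one_left ht0 hγ1.le
    have h3 : (0:ℝ) < 1 - γ^2*t^2 := by nlinarith [sq_nonneg (γ*t), mul_le_of_le_one_right hγ0.le ht1.le, mul_nonneg hγ0.le ht0]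
    have ha : 1 - t^2 ≤ 2*(1-γ*t) := by nlinarith [sq_nonneg (1-t)]
    have hb : 1 - γ^2*t^2 ≤ 2*(1-γ*t) := by nlinarith [sq_nonneg (1-γ*t)]
    have hprod : (1-t^2)*(1-γ^2*t^2) ≤ (2*(1-γ*t))^2 := by nlinarith [mul_le_mul ha hb h3.le (by positivity : (0:ℝ) ≤ 2*(1-γ*t))]
    have hsq : Real.sqrt ((1-t^2)*(1-γ^2*t^2)) ≤ 2*(1-γ*t) := by
      calc Real.sqrt ((1-t^2)*(1-γ^2*t^2)) ≤ Real.sqrt ((2*(1-γ*t))^2) :=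
            Real.sqrt_le_sqrt hprod
        _ = 2*(1-γ*t) := Real.sqrt_sq (by positivity)
    have hsqpos : 0 < Real.sqrt ((1-t^2)*(1-γ^2*t^2)) := Real.sqrt_pos.2 (by positivity)
    show (2*(1-γ*t))⁻¹ ≤ wK γ t
    unfold wK
    rw [inv_eq_one_div]
    exact one_div_le_one_div_of_le hsqpos hsq
  have heval : (∫ t in (0:ℝ)..1, (2*(1-γ*t))⁻¹) = -Real.log (1-γ)/(2*γ) := by
    have : (∫ t in (0:ℝ)..1, (2*(1-γ*t))⁻¹) = ∫ t in (0:ℝ)..1, 2⁻¹ * (1-γ*t)⁻¹ := by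
      congr 1; funext t; rw [mul_inv]
    rw [this, intervalIntegral.integral_const_mul, integral_one_div_one_sub_mul hγ0 hγ1]
    field_simp
  rw [ellK_eq]
  linarith

lemma tendsto_K_atTop : Tendsto ellK (𝓝[<] (1:ℝ)) atTop := by
  have h1 : Tendsto (fun γ : ℝ => 1-γ) (𝓝[<] (1:ℝ)) (𝓝[>] (0:ℝ)) := by
    apply tendsto_nhdsWithin_of_tendsto_nhds_of_eventually_within
    · have : Tendsto (fun γ : ℝ => 1-γ) (𝓝 1) (𝓝 (1-1)) :=
        (continuous_const.sub continuous_id).tendsto 1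
      simpa using this.mono_left nhdsWithin_le_nhds
    · filter_upwards [self_mem_nhdsWithin] with x hx
      exact mem_Ioi.2 (by simp only [mem_Iio] at hx; linarith)
  have h2 : Tendsto (fun γ : ℝ => Real.log (1-γ)) (𝓝[<] (1:ℝ)) atBot :=
    Real.tendsto_log_nhdsGT_zero.comp h1
  have h3 : Tendsto (fun γ : ℝ => -Real.log (1-γ)) (𝓝[<] (1:ℝ)) atTop :=
    tendsto_neg_atBot_atTop.comp h2
  have h4 : Tendsto (fun γ : ℝ => -Real.log (1-γ) * (1/2)) (𝓝[<] (1:ℝ)) atTop :=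
    h3.atTop_mul_const (by norm_num)
  apply tendsto_atTop_mono' _ ?_ h4
  filter_upwards [Ioo_mem_nhdsLT_of_mem (show (1:ℝ) ∈ Ioc (1/2 : ℝ) 1 by constructor <;> norm_num)]
    with γ hγ
  have hγ0 : (0:ℝ) < γ := by linarith [hγ.1]
  have hK := K_lower hγ0 hγ.2
  have hlog : 0 ≤ -Real.log (1-γ) := by
    have := Real.log_nonpos (x := 1-γ) (by linarith [hγ.2]) (by linarith [hγ0])
    linarith
  have hstep : -Real.log (1-γ) * (1/2) ≤ -Real.log (1-γ)/(2*γ) := by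
    have hgoal : (1:ℝ)/2 ≤ 1/(2*γ) :=
      one_div_le_one_div_of_le (by linarith [hγ.1]) (by linarith [hγ.2])
    calc -Real.log (1-γ) * (1/2) ≤ -Real.log (1-γ) * (1/(2*γ)) :=
          mul_le_mul_of_nonneg_left hgoal hlog
      _ = -Real.log (1-γ)/(2*γ) := by ring
  exact le_trans hstep hK

lemma tendsto_H_atBot :
    Tendsto (fun γ : ℝ => ((γ^2 - 2) * ellK γ + 3 * ellE γ) * ellK γ) (𝓝[<] (1:ℝ)) atBot := by
  have hg : Tendsto (fun u : ℝ => u*(u - 3*(π/2))) atTop atTop :=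
    tendsto_id.atTop_mul_atTop₀ (tendsto_atTop_add_const_right _ _ tendsto_id)
  have hg2 : Tendsto (fun γ : ℝ => -(ellK γ * (ellK γ - 3*(π/2)))) (𝓝[<] (1:ℝ)) atBot :=
    tendsto_neg_atTop_atBot.comp (hg.comp tendsto_K_atTop)
  apply tendsto_atBot_mono' _ ?_ hg2
  filter_upwards [Ioo_mem_nhdsLT_of_mem (show (1:ℝ) ∈ Ioc (0:ℝ) 1 by constructor <;> norm_num)]
    with γ hγ
  have hK := posK hγ.1.le hγ.2
  have hE := ellE_le hγ.1.le hγ.2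
  have hm := hγsq hγ.1.le hγ.2
  have h1 : (γ^2-2)*ellK γ + 3*ellE γ ≤ 3*(π/2) - ellK γ := by
    nlinarith [mul_nonneg (sub_nonneg.2 hm.le) hK.le]
  calc ((γ^2-2)*ellK γ + 3*ellE γ)*ellK γ ≤ (3*(π/2) - ellK γ)*ellK γ :=
        mul_le_mul_of_nonneg_right h1 hK.le
    _ = -(ellK γ * (ellK γ - 3*(π/2))) := by ring

/-- The function `H(γ) = [(γ² - 2)K(γ) + 3E(γ)]K(γ)` is strictly decreasing on `[0,1)`
and maps `[0,1)` onto `(-∞, π²/4]`. -/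
theorem H_strictAnti_and_surj :
    StrictAntiOn (fun γ : ℝ => ((γ^2 - 2) * ellK γ + 3 * ellE γ) * ellK γ)
      (Set.Ico 0 1) ∧
    (fun γ : ℝ => ((γ^2 - 2) * ellK γ + 3 * ellE γ) * ellK γ) '' Set.Ico 0 1 =
      Set.Iic (π^2 / 4) := by
  set H : ℝ → ℝ := fun γ : ℝ => ((γ^2 - 2) * ellK γ + 3 * ellE γ) * ellK γ with hH
  have contOn : ContinuousOn H (Ico 0 1) :=
    fun x hx => (hasDerivAt_H hx.1 hx.2).continuousAt.continuousWithinAt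
  have hanti : StrictAntiOn H (Ico 0 1) := by
    apply strictAntiOn_of_deriv_neg (convex_Ico 0 1) contOn
    rw [interior_Ico]
    intro x hx
    rw [(hasDerivAt_H hx.1.le hx.2).deriv]
    exact derivH_neg hx.1 hx.2
  have H0 : H 0 = π^2/4 := by
    rw [hH]
    simp only [ellK_zero, ellE_zero]
    ring
  refine ⟨hanti, ?_⟩
  apply Set.Subset.antisymm
  · rintro y ⟨x, hx, rfl⟩
    simp only [mem_Iic]
    rcases eq_or_lt_of_le hx.1 with h | h
    · rw [show H x = H 0 by rw [← h], H0]
    · have hlt := hanti (show (0:ℝ) ∈ Ico (0:ℝ) 1 by constructor <;> norm_num) hx h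
      rw [H0] at hlt
      exact hlt.le
  · intro y hy
    rw [mem_Iic] at hy
    have hev : ∀ᶠ γ in 𝓝[<] (1:ℝ), H γ < y :=
      tendsto_H_atBot.eventually (eventually_lt_atBot y)
    have hev2 : Ioo (0:ℝ) 1 ∈ 𝓝[<] (1:ℝ) :=
      Ioo_mem_nhdsLT_of_mem (show (1:ℝ) ∈ Ioc (0:ℝ) 1 by constructor <;> norm_num)
    obtain ⟨γ₁, hγ₁y, hγ₁⟩ := (hev.and (eventually_of_mem hev2 (fun _ h => h))).exists
    have hcont : ContinuousOn H (Icc 0 γ₁) :=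
      contOn.mono (fun z hz => ⟨hz.1, lt_of_le_of_lt hz.2 hγ₁.2⟩)
    obtain ⟨x, hx, hxy⟩ := intermediate_value_Icc' hγ₁.1.le hcont
      (show y ∈ Icc (H γ₁) (H 0) from ⟨hγ₁y.le, by rw [H0]; exact hy⟩)
    exact ⟨x, ⟨hx.1, lt_of_le_of_lt hx.2 hγ₁.2⟩, hxy⟩
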